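/- Let p ≥ 1 and let ω₁,…,ω_p be pairwise distinct positive real numbers. Suppose for each k = 1,…,p the function λ_k : ℝ → ℝ is bounded, of class C¹, and has bounded derivative. For each positive integer j define u^j_{2k−1}(t) := √(2ω_k j)·λ_k(t)·cos(ω_k j t) and u^j_{2k}(t) := √(2ω_k j)·sin(ω_k j t) for k = 1,…,p. Then the sequence of ordinary inputs u^j = (u^j_1,…,u^j_{2p}) GD(2)-converges uniformly to the polynomial input v of order ≤ 2 (in m = 2p indices) whose coefficients are v_{(2k−1,2k)} = λ_k, v_{(2k,2k−1)} = −λ_k, and v_I = 0 for all other multi-indices I with 0 < |I| ≤ 2. -/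

import Mathlib

open Filter MeasureTheory Topology Set

section Inputs

def OrdinaryInput (m : ℕ) (u : Fin m → ℝ → ℝ) : Prop :=
  ∀ i : Fin m, Measurable (u i) ∧ ∃ c : ℝ, ∀ t : ℝ, |u i t| ≤ c

def PolyInput (m r : ℕ) (v : List (Fin m) → ℝ → ℝ) : Prop :=
  ∀ I : List (Fin m), 0 < I.length → I.length ≤ r →
    Measurable (v I) ∧ ∃ c : ℝ, ∀ t : ℝ, |v I t| ≤ c

/-- `W` is an `r`-th order generalized difference of `u` and `v` (the locally
absolutely continuous solutions of `Ẇ_i = v_i − u_i`, `Ẇ_{iI} = v_{iI} − u_i W_I`,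
encoded by the integral equations). -/
def IsGenDiff (m r : ℕ) (u : Fin m → ℝ → ℝ) (v W : List (Fin m) → ℝ → ℝ) : Prop :=
  (∀ i : Fin m,
    (∀ a b : ℝ, IntervalIntegrable (fun s => v [i] s - u i s) MeasureTheory.volume a b) ∧
    ∀ t : ℝ, W [i] t = W [i] 0 + ∫ s in (0:ℝ)..t, (v [i] s - u i s)) ∧
  (∀ i : Fin m, ∀ I : List (Fin m), 0 < I.length → I.length < r →
    (∀ a b : ℝ, IntervalIntegrable (fun s => v (i :: I) s - u i s * W I s)
      MeasureTheory.volume a b) ∧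
    ∀ t : ℝ, W (i :: I) t = W (i :: I) 0 + ∫ s in (0:ℝ)..t, (v (i :: I) s - u i s * W I s))

/-- The sequence of ordinary inputs `u^j` GD(`r`)-converges uniformly to `v`. -/
def GDConvUnif (m r : ℕ) (u : ℕ → Fin m → ℝ → ℝ) (v : List (Fin m) → ℝ → ℝ) : Prop :=
  ∃ (vs : ℕ → List (Fin m) → ℝ → ℝ) (W : ℕ → List (Fin m) → ℝ → ℝ),
    (∀ j, PolyInput m r (vs j)) ∧
    (∀ j, IsGenDiff m r (u j) (vs j) (W j)) ∧
    ∀ I : List (Fin m), 0 < I.length → I.length ≤ r →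
      TendstoUniformly (fun j t => vs j I t) (v I) atTop ∧
      TendstoUniformly (fun j t => W j I t) (fun _ => 0) atTop ∧
      (I.length = r → ∀ i : Fin m,
        TendstoUniformly (fun j t => u j i t * W j I t) (fun _ => 0) atTop)

end Inputs

/-- The index `2k-1` (1-based), i.e. `2k` (0-based), among `{1,…,2p}`. -/
def idxA (p : ℕ) (k : Fin p) : Fin (2 * p) :=
  ⟨2 * k.1, by have := k.isLt; omega⟩

/-- The index `2k` (1-based), i.e. `2k+1` (0-based), among `{1,…,2p}`. -/
def idxB (p : ℕ) (k : Fin p) : Fin (2 * p) :=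
  ⟨2 * k.1 + 1, by have := k.isLt; omega⟩

namespace Stmt9Aux

lemma sqrtNat_atTop : Tendsto (fun j : ℕ => Real.sqrt j) atTop atTop := by
  apply tendsto_atTop_atTop.mpr
  intro b
  refine ⟨Nat.ceil (max (b^2) 0), fun j hj => ?_⟩
  have h1 : (max (b^2) 0 : ℝ) ≤ j := le_trans (Nat.le_ceil _) (by exact_mod_cast hj)
  calc b ≤ Real.sqrt (b^2) := by rw [Real.sqrt_sq_eq_abs]; exact le_abs_self b
    _ ≤ Real.sqrt j := Real.sqrt_le_sqrt (le_trans (le_max_left _ _) h1)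

lemma tu_of_bound {F : ℕ → ℝ → ℝ} {f : ℝ → ℝ} {b : ℕ → ℝ}
    (hb : Tendsto b atTop (𝓝 0)) (h : ∀ᶠ j in atTop, ∀ t, |F j t - f t| ≤ b j) :
    TendstoUniformly F f atTop := by
  rw [Metric.tendstoUniformly_iff]
  intro ε hε
  filter_upwards [h, hb.eventually (gt_mem_nhds hε)] with j hj hbj t
  rw [Real.dist_eq]
  calc |f t - F j t| = |F j t - f t| := abs_sub_comm _ _
    _ ≤ b j := hj t
    _ < ε := hbj

lemma tendsto_div_sqrt (C : ℝ) : Tendsto (fun j : ℕ => C / Real.sqrt j) atTop (𝓝 0) :=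
  Tendsto.div_atTop tendsto_const_nhds sqrtNat_atTop

/-- antiderivative of `g t * sin (β t)` up to `O(1/β)` -/
noncomputable def AS (g : ℝ → ℝ) (β : ℝ) (t : ℝ) : ℝ := -(g t * Real.cos (β * t)) / β
/-- antiderivative of `g t * cos (β t)` up to `O(1/β)` (for `β ≠ 0`) -/
noncomputable def AC (g : ℝ → ℝ) (β : ℝ) (t : ℝ) : ℝ := g t * Real.sin (β * t) / β

lemma hasDerivAt_AS {g g' : ℝ → ℝ} {t : ℝ} (hg : HasDerivAt g (g' t) t) (β : ℝ) :
    HasDerivAt (AS g β) (g t * Real.sin (β * t) - g' t * Real.cos (β * t) / β) t := by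
  rcases eq_or_ne β 0 with rfl | hβ
  · have : AS g 0 = fun _ => 0 := by
      funext s; simp [AS]
    rw [this]
    simpa using (hasDerivAt_const t (0:ℝ))
  · have hc : HasDerivAt (fun s => Real.cos (β * s)) (-Real.sin (β * t) * β) t := by
      simpa [Function.comp_def] using (Real.hasDerivAt_cos (β * t)).comp t ((hasDerivAt_id t).const_mul β)
    have := ((hg.mul hc).neg).div_const β
    refine this.congr_deriv ?_
    field_simp
    ring

lemma hasDerivAt_AC {g g' : ℝ → ℝ} {t : ℝ} (hg : HasDerivAt g (g' t) t) {β : ℝ}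
    (hβ : β ≠ 0) :
    HasDerivAt (AC g β) (g t * Real.cos (β * t) + g' t * Real.sin (β * t) / β) t := by
  have hc : HasDerivAt (fun s => Real.sin (β * s)) (Real.cos (β * t) * β) t := by
    simpa [Function.comp_def] using (Real.hasDerivAt_sin (β * t)).comp t ((hasDerivAt_id t).const_mul β)
  have := (hg.mul hc).div_const β
  refine this.congr_deriv ?_
  field_simp
  ring

lemma abs_AS_le {g : ℝ → ℝ} {c : ℝ} (hgc : ∀ s, |g s| ≤ c) (β t : ℝ) :
    |AS g β t| ≤ c / |β| := by
  rcases eq_or_ne β 0 with rfl | hβ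
  · simp [AS]
  · rw [AS, abs_div, abs_neg]
    apply (div_le_div_iff_of_pos_right (abs_pos.mpr hβ)).mpr
    calc |g t * Real.cos (β * t)| = |g t| * |Real.cos (β * t)| := abs_mul _ _
      _ ≤ c * 1 := mul_le_mul (hgc t) (Real.abs_cos_le_one _) (abs_nonneg _)
          (le_trans (abs_nonneg _) (hgc t))
      _ = c := mul_one c

lemma abs_AC_le {g : ℝ → ℝ} {c : ℝ} (hgc : ∀ s, |g s| ≤ c) (β t : ℝ) :
    |AC g β t| ≤ c / |β| := by
  rcases eq_or_ne β 0 with rfl | hβ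
  · simp [AC]
  · rw [AC, abs_div]
    apply (div_le_div_iff_of_pos_right (abs_pos.mpr hβ)).mpr
    calc |g t * Real.sin (β * t)| = |g t| * |Real.sin (β * t)| := abs_mul _ _
      _ ≤ c * 1 := mul_le_mul (hgc t) (Real.abs_sin_le_one _) (abs_nonneg _)
          (le_trans (abs_nonneg _) (hgc t))
      _ = c := mul_one c

lemma sqrt_div_mul_self {x : ℝ} (hx : 0 ≤ x) : Real.sqrt (2 / x) * x = Real.sqrt (2 * x) := by
  rcases eq_or_lt_of_le hx with rfl | hx'
  · simp
  · rw [show Real.sqrt (2/x) * x = Real.sqrt (2/x) * Real.sqrt (x^2) by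
      rw [Real.sqrt_sq hx], ← Real.sqrt_mul (by positivity)]
    congr 1
    field_simp

lemma sqrt_mul_sqrt_div {a a' : ℝ} (ha : 0 < a) (ha' : 0 < a') {j : ℝ} (hj : 0 < j) :
    Real.sqrt (2 * a * j) * Real.sqrt (2 / (a' * j)) = 2 * Real.sqrt (a / a') := by
  rw [← Real.sqrt_mul (by positivity)]
  rw [show 2 * a * j * (2 / (a' * j)) = 2^2 * (a / a') by field_simp]
  rw [Real.sqrt_mul (by positivity), Real.sqrt_sq (by norm_num)]

def kOf (p : ℕ) (i : Fin (2*p)) : Fin p := ⟨i.1/2, by have := i.isLt; omega⟩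
def bOf (p : ℕ) (i : Fin (2*p)) : Bool := decide (i.1 % 2 = 1)

lemma idx_cases (p : ℕ) (i : Fin (2*p)) :
    (i = idxA p (kOf p i) ∧ bOf p i = false) ∨ (i = idxB p (kOf p i) ∧ bOf p i = true) := by
  rcases Nat.mod_two_eq_zero_or_one i.1 with h | h
  · left
    exact ⟨Fin.ext (by simp [idxA, kOf]; omega), by simp [bOf, h]⟩
  · right
    exact ⟨Fin.ext (by simp [idxB, kOf]; omega), by simp [bOf, h]⟩

variable (p : ℕ) (ω : Fin p → ℝ) (lam : Fin p → ℝ → ℝ)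

noncomputable def uF (j : ℕ) (i : Fin (2*p)) (t : ℝ) : ℝ :=
  Real.sqrt (2 * ω (kOf p i) * j) *
    (if bOf p i then Real.sin (ω (kOf p i) * j * t)
     else lam (kOf p i) t * Real.cos (ω (kOf p i) * j * t))

noncomputable def W1 (j : ℕ) (i : Fin (2*p)) (t : ℝ) : ℝ :=
  if bOf p i then Real.sqrt (2 / (ω (kOf p i) * j)) * Real.cos (ω (kOf p i) * j * t)
  else -(Real.sqrt (2 / (ω (kOf p i) * j)) * lam (kOf p i) t * Real.sin (ω (kOf p i) * j * t))

noncomputable def vs1 (j : ℕ) (i : Fin (2*p)) (t : ℝ) : ℝ :=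
  if bOf p i then 0
  else -(Real.sqrt (2 / (ω (kOf p i) * j)) * deriv (lam (kOf p i)) t
        * Real.sin (ω (kOf p i) * j * t))

lemma hasDerivAt_W1 (hω : ∀ k, 0 < ω k)
    (hlam : ∀ k t, HasDerivAt (lam k) (deriv (lam k) t) t) (j : ℕ) (i : Fin (2*p)) (t : ℝ) :
    HasDerivAt (W1 p ω lam j i) (vs1 p ω lam j i t - uF p ω lam j i t) t := by
  set k := kOf p i
  set a := ω k with ha
  set s := Real.sqrt (2 / (a * j)) with hs
  have hsc : s * (a * j) = Real.sqrt (2 * a * ↑j) := by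
    rw [show (2:ℝ) * a * ↑j = 2 * (a * ↑j) by ring]
    exact sqrt_div_mul_self (mul_nonneg (hω k).le (Nat.cast_nonneg j))
  have hcos : HasDerivAt (fun x => Real.cos (a * ↑j * x)) (-Real.sin (a * ↑j * t) * (a * ↑j)) t := by
    simpa [Function.comp_def] using (Real.hasDerivAt_cos (a * ↑j * t)).comp t ((hasDerivAt_id t).const_mul (a * ↑j))
  have hsin : HasDerivAt (fun x => Real.sin (a * ↑j * x)) (Real.cos (a * ↑j * t) * (a * ↑j)) t := by
    simpa [Function.comp_def] using (Real.hasDerivAt_sin (a * ↑j * t)).comp t ((hasDerivAt_id t).const_mul (a * ↑j))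
  cases hb : bOf p i
  · -- A-type
    have hd : HasDerivAt (fun x => -(s * lam k x * Real.sin (a * ↑j * x)))
        (-((0 * lam k t + s * deriv (lam k) t) * Real.sin (a * ↑j * t)
          + s * lam k t * (Real.cos (a * ↑j * t) * (a * ↑j)))) t :=
      (((hasDerivAt_const t s).mul (hlam k t)).mul hsin).neg
    have : W1 p ω lam j i = fun x => -(s * lam k x * Real.sin (a * ↑j * x)) := by
      funext x; simp only [W1, hb, Bool.false_eq_true, if_false]; rfl
    rw [this]
    refine hd.congr_deriv ?_
    simp only [vs1, uF, hb, if_neg, Bool.false_eq_true, if_false]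
    rw [← hsc]
    ring
  · -- B-type
    have hd : HasDerivAt (fun x => s * Real.cos (a * ↑j * x))
        (s * (-Real.sin (a * ↑j * t) * (a * ↑j))) t := hcos.const_mul s
    have : W1 p ω lam j i = fun x => s * Real.cos (a * ↑j * x) := by
      funext x; simp only [W1, hb, if_true]; rfl
    rw [this]
    refine hd.congr_deriv ?_
    simp only [vs1, uF, hb, if_true]
    rw [← hsc]
    ring

noncomputable def gf (i i' : Fin (2*p)) (t : ℝ) : ℝ :=
  Real.sqrt (ω (kOf p i) / ω (kOf p i')) *
    ((if bOf p i then 1 else lam (kOf p i) t) * (if bOf p i' then 1 else lam (kOf p i') t))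

noncomputable def gf' (i i' : Fin (2*p)) (t : ℝ) : ℝ :=
  Real.sqrt (ω (kOf p i) / ω (kOf p i')) *
    ((if bOf p i then 0 else deriv (lam (kOf p i)) t) *
        (if bOf p i' then 1 else lam (kOf p i') t)
      + (if bOf p i then 1 else lam (kOf p i) t) *
        (if bOf p i' then 0 else deriv (lam (kOf p i')) t))

def bP (i i' : Fin (2*p)) (j : ℕ) : ℝ := (ω (kOf p i) + ω (kOf p i')) * j
def bM (i i' : Fin (2*p)) (j : ℕ) : ℝ := (ω (kOf p i) - ω (kOf p i')) * j

lemma hasDerivAt_gf (hlam : ∀ k t, HasDerivAt (lam k) (deriv (lam k) t) t)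
    (i i' : Fin (2*p)) (t : ℝ) :
    HasDerivAt (gf p ω lam i i') (gf' p ω lam i i' t) t := by
  have h1 : HasDerivAt (fun x => if bOf p i then 1 else lam (kOf p i) x)
      (if bOf p i then 0 else deriv (lam (kOf p i)) t) t := by
    cases hb : bOf p i <;> simp only [Bool.false_eq_true, if_false, if_true]
    · exact hlam _ t
    · exact hasDerivAt_const t 1
  have h2 : HasDerivAt (fun x => if bOf p i' then 1 else lam (kOf p i') x)
      (if bOf p i' then 0 else deriv (lam (kOf p i')) t) t := by
    cases hb : bOf p i' <;> simp only [Bool.false_eq_true, if_false, if_true]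
    · exact hlam _ t
    · exact hasDerivAt_const t 1
  exact (h1.mul h2).const_mul _

noncomputable def W2 (j : ℕ) (i i' : Fin (2*p)) (t : ℝ) : ℝ :=
  if bOf p i then
    (if bOf p i' then -(AS (gf p ω lam i i') (bP p ω i i' j) t + AS (gf p ω lam i i') (bM p ω i i' j) t)
     else (if kOf p i = kOf p i' then 0 else AC (gf p ω lam i i') (bM p ω i i' j) t)
            - AC (gf p ω lam i i') (bP p ω i i' j) t)
  else
    (if bOf p i' then (if kOf p i = kOf p i' then 0 else -AC (gf p ω lam i i') (bM p ω i i' j) t)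
            - AC (gf p ω lam i i') (bP p ω i i' j) t
     else AS (gf p ω lam i i') (bP p ω i i' j) t - AS (gf p ω lam i i') (bM p ω i i' j) t)

noncomputable def vs2 (j : ℕ) (i i' : Fin (2*p)) (t : ℝ) : ℝ :=
  if bOf p i then
    (if bOf p i' then
        gf' p ω lam i i' t * Real.cos (bP p ω i i' j * t) / bP p ω i i' j
          + gf' p ω lam i i' t * Real.cos (bM p ω i i' j * t) / bM p ω i i' j
     else (if kOf p i = kOf p i' then -(gf p ω lam i i' t)
           else gf' p ω lam i i' t * Real.sin (bM p ω i i' j * t) / bM p ω i i' j)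
            - gf' p ω lam i i' t * Real.sin (bP p ω i i' j * t) / bP p ω i i' j)
  else
    (if bOf p i' then
        (if kOf p i = kOf p i' then gf p ω lam i i' t
         else -(gf' p ω lam i i' t * Real.sin (bM p ω i i' j * t) / bM p ω i i' j))
          - gf' p ω lam i i' t * Real.sin (bP p ω i i' j * t) / bP p ω i i' j
     else -(gf' p ω lam i i' t * Real.cos (bP p ω i i' j * t) / bP p ω i i' j)
            + gf' p ω lam i i' t * Real.cos (bM p ω i i' j * t) / bM p ω i i' j)

lemma hasDerivAt_W2 (hω : ∀ k, 0 < ω k) (hωinj : Function.Injective ω)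
    (hlam : ∀ k t, HasDerivAt (lam k) (deriv (lam k) t) t)
    {j : ℕ} (hj : 1 ≤ j) (i i' : Fin (2*p)) (t : ℝ) :
    HasDerivAt (W2 p ω lam j i i')
      (vs2 p ω lam j i i' t - uF p ω lam j i t * W1 p ω lam j i' t) t := by
  set k := kOf p i with hk
  set l := kOf p i' with hl
  set a := ω k with ha
  set a' := ω l with ha'
  set g := gf p ω lam i i' with hgdef
  set g' := gf' p ω lam i i' with hgdef'
  have hjpos : (0:ℝ) < (j:ℝ) := by exact_mod_cast hj
  have hr : Real.sqrt (2 * a * j) * Real.sqrt (2 / (a' * j)) = 2 * Real.sqrt (a / a') :=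
    sqrt_mul_sqrt_div (hω k) (hω l) hjpos
  have hβp : bP p ω i i' j ≠ 0 :=
    ne_of_gt (mul_pos (by rw [← hk, ← hl, ← ha, ← ha']; exact add_pos (hω k) (hω l)) hjpos)
  have hβm : k ≠ l → bM p ω i i' j ≠ 0 := by
    intro hkl
    have : a ≠ a' := fun e => hkl (hωinj e)
    exact mul_ne_zero (sub_ne_zero.mpr this) (ne_of_gt hjpos)
  have hg := hasDerivAt_gf p ω lam hlam i i' t
  rw [← hgdef, ← hgdef'] at hg
  have hβpt : bP p ω i i' j * t = a * ↑j * t + a' * ↑j * t := by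
    simp only [bP, ← hk, ← hl, ← ha, ← ha']; ring
  have hβmt : bM p ω i i' j * t = a * ↑j * t - a' * ↑j * t := by
    simp only [bM, ← hk, ← hl, ← ha, ← ha']; ring
  cases hbi : bOf p i <;> cases hbi' : bOf p i'
  · -- (A, A)
    have hprod : uF p ω lam j i t * W1 p ω lam j i' t
        = -(g t * Real.sin (bP p ω i i' j * t)) + g t * Real.sin (bM p ω i i' j * t) := by
      simp only [uF, W1, hbi, hbi', Bool.false_eq_true, if_false, hgdef, gf, ← hk, ← hl,
        ← ha, ← ha']
      rw [hβpt, hβmt, Real.sin_add, Real.sin_sub]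
      linear_combination (-(lam k t * lam l t *
        (Real.cos (a * ↑j * t) * Real.sin (a' * ↑j * t)))) * hr
    have hW2eq : W2 p ω lam j i i'
        = fun x => AS g (bP p ω i i' j) x - AS g (bM p ω i i' j) x := by
      funext x
      simp only [W2, hbi, hbi', Bool.false_eq_true, if_false, hgdef]
    have hd := (hasDerivAt_AS (t := t) hg (bP p ω i i' j)).sub
      (hasDerivAt_AS (t := t) hg (bM p ω i i' j))
    rw [hW2eq, hprod]
    refine hd.congr_deriv ?_
    simp only [vs2, hbi, hbi', Bool.false_eq_true, if_false, hgdef, hgdef']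
    ring
  · -- (A, B)
    have hprod : uF p ω lam j i t * W1 p ω lam j i' t
        = g t * Real.cos (bM p ω i i' j * t) + g t * Real.cos (bP p ω i i' j * t) := by
      simp only [uF, W1, hbi, hbi', Bool.false_eq_true, if_false, if_true, hgdef, gf,
        ← hk, ← hl, ← ha, ← ha']
      rw [hβpt, hβmt, Real.cos_add, Real.cos_sub]
      linear_combination (lam k t * (Real.cos (a * ↑j * t) * Real.cos (a' * ↑j * t))) * hr
    by_cases hkl : k = l
    · have haa : a = a' := by rw [ha, ha', hkl]
      have hbm0 : bM p ω i i' j * t = 0 := by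
        simp only [bM, ← hk, ← hl, ← ha, ← ha', ← haa]; ring
      have hW2eq : W2 p ω lam j i i' = fun x => 0 - AC g (bP p ω i i' j) x := by
        funext x
        simp only [W2, hbi, hbi', Bool.false_eq_true, if_false, if_true, ← hk, ← hl,
          if_pos hkl, hgdef]
      have hd := (hasDerivAt_const t (0:ℝ)).sub (hasDerivAt_AC (t := t) hg hβp)
      rw [hW2eq, hprod]
      refine hd.congr_deriv ?_
      simp only [vs2, hbi, hbi', Bool.false_eq_true, if_false, if_true, ← hk, ← hl,
        if_pos hkl, hgdef, hgdef', hbm0, Real.cos_zero]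
      ring
    · have hW2eq : W2 p ω lam j i i'
          = fun x => -AC g (bM p ω i i' j) x - AC g (bP p ω i i' j) x := by
        funext x
        simp only [W2, hbi, hbi', Bool.false_eq_true, if_false, if_true, ← hk, ← hl,
          if_neg hkl, hgdef]
      have hd := ((hasDerivAt_AC (t := t) hg (hβm hkl)).neg).sub
        (hasDerivAt_AC (t := t) hg hβp)
      rw [hW2eq, hprod]
      refine hd.congr_deriv ?_
      simp only [vs2, hbi, hbi', Bool.false_eq_true, if_false, if_true, ← hk, ← hl,
        if_neg hkl, hgdef, hgdef']
      ring
  · -- (B, A)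
    have hprod : uF p ω lam j i t * W1 p ω lam j i' t
        = -(g t * Real.cos (bM p ω i i' j * t)) + g t * Real.cos (bP p ω i i' j * t) := by
      simp only [uF, W1, hbi, hbi', Bool.false_eq_true, if_false, if_true, hgdef, gf,
        ← hk, ← hl, ← ha, ← ha']
      rw [hβpt, hβmt, Real.cos_add, Real.cos_sub]
      linear_combination (-(lam l t * (Real.sin (a * ↑j * t) * Real.sin (a' * ↑j * t)))) * hr
    by_cases hkl : k = l
    · have haa : a = a' := by rw [ha, ha', hkl]
      have hbm0 : bM p ω i i' j * t = 0 := by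
        simp only [bM, ← hk, ← hl, ← ha, ← ha', ← haa]; ring
      have hW2eq : W2 p ω lam j i i' = fun x => 0 - AC g (bP p ω i i' j) x := by
        funext x
        simp only [W2, hbi, hbi', Bool.false_eq_true, if_false, if_true, ← hk, ← hl,
          if_pos hkl, hgdef]
      have hd := (hasDerivAt_const t (0:ℝ)).sub (hasDerivAt_AC (t := t) hg hβp)
      rw [hW2eq, hprod]
      refine hd.congr_deriv ?_
      simp only [vs2, hbi, hbi', Bool.false_eq_true, if_false, if_true, ← hk, ← hl,
        if_pos hkl, hgdef, hgdef', hbm0, Real.cos_zero]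
      ring
    · have hW2eq : W2 p ω lam j i i'
          = fun x => AC g (bM p ω i i' j) x - AC g (bP p ω i i' j) x := by
        funext x
        simp only [W2, hbi, hbi', Bool.false_eq_true, if_false, if_true, ← hk, ← hl,
          if_neg hkl, hgdef]
      have hd := (hasDerivAt_AC (t := t) hg (hβm hkl)).sub
        (hasDerivAt_AC (t := t) hg hβp)
      rw [hW2eq, hprod]
      refine hd.congr_deriv ?_
      simp only [vs2, hbi, hbi', Bool.false_eq_true, if_false, if_true, ← hk, ← hl,
        if_neg hkl, hgdef, hgdef']
      ring
  · -- (B, B)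
    have hprod : uF p ω lam j i t * W1 p ω lam j i' t
        = g t * Real.sin (bP p ω i i' j * t) + g t * Real.sin (bM p ω i i' j * t) := by
      simp only [uF, W1, hbi, hbi', if_true, hgdef, gf, ← hk, ← hl, ← ha, ← ha']
      rw [hβpt, hβmt, Real.sin_add, Real.sin_sub]
      linear_combination (Real.sin (a * ↑j * t) * Real.cos (a' * ↑j * t)) * hr
    have hW2eq : W2 p ω lam j i i'
        = fun x => -(AS g (bP p ω i i' j) x + AS g (bM p ω i i' j) x) := by
      funext x
      simp only [W2, hbi, hbi', if_true, hgdef]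
    have hd := ((hasDerivAt_AS (t := t) hg (bP p ω i i' j)).add
      (hasDerivAt_AS (t := t) hg (bM p ω i i' j))).neg
    rw [hW2eq, hprod]
    refine hd.congr_deriv ?_
    simp only [vs2, hbi, hbi', if_true, hgdef, hgdef']
    ring

-- index computation lemmas
lemma bOf_idxA (m : Fin p) : bOf p (idxA p m) = false := by
  simp [bOf, idxA]; try omega
lemma bOf_idxB (m : Fin p) : bOf p (idxB p m) = true := by
  simp [bOf, idxB]; try omega
lemma kOf_idxA (m : Fin p) : kOf p (idxA p m) = m := by
  apply Fin.ext; simp [kOf, idxA]; try omega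
lemma kOf_idxB (m : Fin p) : kOf p (idxB p m) = m := by
  apply Fin.ext; simp [kOf, idxB]; try omega

/-- the limit of `vs2`. -/
noncomputable def Mlim (i i' : Fin (2*p)) (t : ℝ) : ℝ :=
  if kOf p i = kOf p i' then
    (if bOf p i then (if bOf p i' then 0 else -(gf p ω lam i i' t))
     else (if bOf p i' then gf p ω lam i i' t else 0))
  else 0

lemma abs_err_le {x c : ℝ} (hx : |x| ≤ c) {tr : ℝ} (htr : |tr| ≤ 1) (β : ℝ) :
    |x * tr / β| ≤ c / |β| := by
  rcases eq_or_ne β 0 with rfl | hβ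
  · simp
  · rw [abs_div]
    apply (div_le_div_iff_of_pos_right (abs_pos.mpr hβ)).mpr
    calc |x * tr| = |x| * |tr| := abs_mul _ _
      _ ≤ c * 1 := mul_le_mul hx htr (abs_nonneg _) (le_trans (abs_nonneg _) hx)
      _ = c := mul_one c

-- continuity
lemma cont_uF (hlamc : ∀ k, Continuous (lam k)) (j : ℕ) (i : Fin (2*p)) :
    Continuous (uF p ω lam j i) := by
  have hcos : Continuous fun x => Real.cos (ω (kOf p i) * j * x) :=
    Real.continuous_cos.comp (continuous_const.mul continuous_id)
  have hsin : Continuous fun x => Real.sin (ω (kOf p i) * j * x) :=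
    Real.continuous_sin.comp (continuous_const.mul continuous_id)
  unfold uF
  cases hb : bOf p i <;> simp only [hb, Bool.false_eq_true, if_false, if_true]
  · exact continuous_const.mul ((hlamc _).mul hcos)
  · exact continuous_const.mul hsin

lemma cont_W1 (hlamc : ∀ k, Continuous (lam k)) (j : ℕ) (i : Fin (2*p)) :
    Continuous (W1 p ω lam j i) := by
  have hcos : Continuous fun x => Real.cos (ω (kOf p i) * j * x) :=
    Real.continuous_cos.comp (continuous_const.mul continuous_id)
  have hsin : Continuous fun x => Real.sin (ω (kOf p i) * j * x) :=
    Real.continuous_sin.comp (continuous_const.mul continuous_id)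
  unfold W1
  cases hb : bOf p i <;> simp only [hb, Bool.false_eq_true, if_false, if_true]
  · exact ((continuous_const.mul (hlamc _)).mul hsin).neg
  · exact continuous_const.mul hcos

lemma cont_vs1 (hlamc' : ∀ k, Continuous (deriv (lam k))) (j : ℕ) (i : Fin (2*p)) :
    Continuous (vs1 p ω lam j i) := by
  have hsin : Continuous fun x => Real.sin (ω (kOf p i) * j * x) :=
    Real.continuous_sin.comp (continuous_const.mul continuous_id)
  unfold vs1
  cases hb : bOf p i <;> simp only [hb, Bool.false_eq_true, if_false, if_true]
  · exact ((continuous_const.mul (hlamc' _)).mul hsin).neg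
  · exact continuous_const

lemma cont_gf (hlamc : ∀ k, Continuous (lam k)) (i i' : Fin (2*p)) :
    Continuous (gf p ω lam i i') := by
  unfold gf
  apply continuous_const.mul
  apply Continuous.mul <;> (split <;> [exact continuous_const; exact hlamc _])

lemma cont_gf' (hlamc : ∀ k, Continuous (lam k)) (hlamc' : ∀ k, Continuous (deriv (lam k)))
    (i i' : Fin (2*p)) : Continuous (gf' p ω lam i i') := by
  unfold gf'
  apply continuous_const.mul
  apply Continuous.add <;> apply Continuous.mul <;>
    (split <;> first
      | exact continuous_const
      | exact hlamc _
      | exact hlamc' _)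

lemma cont_AS {g : ℝ → ℝ} (hg : Continuous g) (β : ℝ) : Continuous (AS g β) := by
  unfold AS
  exact ((hg.mul (Real.continuous_cos.comp (continuous_const.mul continuous_id))).neg).div_const β

lemma cont_AC {g : ℝ → ℝ} (hg : Continuous g) (β : ℝ) : Continuous (AC g β) := by
  unfold AC
  exact (hg.mul (Real.continuous_sin.comp (continuous_const.mul continuous_id))).div_const β

lemma cont_W2 (hlamc : ∀ k, Continuous (lam k)) (j : ℕ) (i i' : Fin (2*p)) :
    Continuous (W2 p ω lam j i i') := by
  have h1 := cont_AS (cont_gf p ω lam hlamc i i') (bP p ω i i' j)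
  have h2 := cont_AS (cont_gf p ω lam hlamc i i') (bM p ω i i' j)
  have h3 := cont_AC (cont_gf p ω lam hlamc i i') (bP p ω i i' j)
  have h4 := cont_AC (cont_gf p ω lam hlamc i i') (bM p ω i i' j)
  unfold W2
  split <;> split <;> try split
  all_goals first
    | exact (h1.add h2).neg
    | exact continuous_const.sub h3
    | exact h4.sub h3
    | exact h4.neg.sub h3
    | exact h1.sub h2

lemma cont_vs2 (hlamc : ∀ k, Continuous (lam k)) (hlamc' : ∀ k, Continuous (deriv (lam k)))
    (j : ℕ) (i i' : Fin (2*p)) : Continuous (vs2 p ω lam j i i') := by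
  have hg := cont_gf p ω lam hlamc i i'
  have hg' := cont_gf' p ω lam hlamc hlamc' i i'
  have hcp : Continuous fun x => Real.cos (bP p ω i i' j * x) :=
    Real.continuous_cos.comp (continuous_const.mul continuous_id)
  have hcm : Continuous fun x => Real.cos (bM p ω i i' j * x) :=
    Real.continuous_cos.comp (continuous_const.mul continuous_id)
  have hsp : Continuous fun x => Real.sin (bP p ω i i' j * x) :=
    Real.continuous_sin.comp (continuous_const.mul continuous_id)
  have hsm : Continuous fun x => Real.sin (bM p ω i i' j * x) :=
    Real.continuous_sin.comp (continuous_const.mul continuous_id)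
  unfold vs2
  split <;> split
  · exact ((hg'.mul hcp).div_const _).add ((hg'.mul hcm).div_const _)
  · split
    · exact hg.neg.sub ((hg'.mul hsp).div_const _)
    · exact ((hg'.mul hsm).div_const _).sub ((hg'.mul hsp).div_const _)
  · split
    · exact hg.sub ((hg'.mul hsp).div_const _)
    · exact ((hg'.mul hsm).div_const _).neg.sub ((hg'.mul hsp).div_const _)
  · exact ((hg'.mul hcp).div_const _).neg.add ((hg'.mul hcm).div_const _)

-- bounds
lemma abs_uF_le {c : ℝ} (hc : ∀ s, |lam (kOf p i) s| ≤ c) (hc1 : 1 ≤ c)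
    (j : ℕ) (t : ℝ) : |uF p ω lam j i t| ≤ Real.sqrt (2 * ω (kOf p i) * j) * c := by
  have h0 : (0:ℝ) ≤ Real.sqrt (2 * ω (kOf p i) * j) := Real.sqrt_nonneg _
  unfold uF
  rw [abs_mul, abs_of_nonneg h0]
  cases hb : bOf p i <;> simp only [hb, Bool.false_eq_true, if_false, if_true] <;> gcongr
  · calc |lam (kOf p i) t * Real.cos (ω (kOf p i) * ↑j * t)|
        = |lam (kOf p i) t| * |Real.cos (ω (kOf p i) * ↑j * t)| := abs_mul _ _
      _ ≤ c * 1 := mul_le_mul (hc t) (Real.abs_cos_le_one _) (abs_nonneg _)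
          (le_trans zero_le_one hc1)
      _ = c := mul_one c
  · exact le_trans (Real.abs_sin_le_one _) hc1

lemma abs_W1_le {c : ℝ} (hc : ∀ s, |lam (kOf p i) s| ≤ c) (hc1 : 1 ≤ c)
    (j : ℕ) (t : ℝ) : |W1 p ω lam j i t| ≤ Real.sqrt (2 / (ω (kOf p i) * j)) * c := by
  have h0 : (0:ℝ) ≤ Real.sqrt (2 / (ω (kOf p i) * j)) := Real.sqrt_nonneg _
  unfold W1
  cases hb : bOf p i <;> simp only [hb, Bool.false_eq_true, if_false, if_true]
  · rw [abs_neg, mul_assoc, abs_mul, abs_of_nonneg h0]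
    gcongr
    calc |lam (kOf p i) t * Real.sin (ω (kOf p i) * ↑j * t)|
        = |lam (kOf p i) t| * |Real.sin (ω (kOf p i) * ↑j * t)| := abs_mul _ _
      _ ≤ c * 1 := mul_le_mul (hc t) (Real.abs_sin_le_one _) (abs_nonneg _)
          (le_trans zero_le_one hc1)
      _ = c := mul_one c
  · rw [abs_mul, abs_of_nonneg h0]
    gcongr
    exact le_trans (Real.abs_cos_le_one _) hc1

lemma abs_vs1_le {c : ℝ} (hc : ∀ s, |deriv (lam (kOf p i)) s| ≤ c) (hc0 : 0 ≤ c)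
    (j : ℕ) (t : ℝ) : |vs1 p ω lam j i t| ≤ Real.sqrt (2 / (ω (kOf p i) * j)) * c := by
  have h0 : (0:ℝ) ≤ Real.sqrt (2 / (ω (kOf p i) * j)) := Real.sqrt_nonneg _
  unfold vs1
  cases hb : bOf p i <;> simp only [hb, Bool.false_eq_true, if_false, if_true]
  · rw [abs_neg, mul_assoc, abs_mul, abs_of_nonneg h0]
    gcongr
    calc |deriv (lam (kOf p i)) t * Real.sin (ω (kOf p i) * ↑j * t)|
        = |deriv (lam (kOf p i)) t| * |Real.sin (ω (kOf p i) * ↑j * t)| := abs_mul _ _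
      _ ≤ c * 1 := mul_le_mul (hc t) (Real.abs_sin_le_one _) (abs_nonneg _) hc0
      _ = c := mul_one c
  · rw [abs_zero]; positivity

lemma abs_W2_le {i i' : Fin (2*p)} {cg : ℝ} (hcg : ∀ s, |gf p ω lam i i' s| ≤ cg)
    (hcg0 : 0 ≤ cg) (j : ℕ) (t : ℝ) :
    |W2 p ω lam j i i' t| ≤ cg / |bP p ω i i' j| + cg / |bM p ω i i' j| := by
  have h1 := abs_AS_le hcg (bP p ω i i' j) t
  have h2 := abs_AS_le hcg (bM p ω i i' j) t
  have h3 := abs_AC_le hcg (bP p ω i i' j) t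
  have h4 := abs_AC_le hcg (bM p ω i i' j) t
  have hm : (0:ℝ) ≤ cg / |bM p ω i i' j| := by positivity
  unfold W2
  split <;> split <;> try split
  all_goals first
    | (rw [abs_neg]; exact le_trans (abs_add_le _ _) (add_le_add h1 h2))
    | (exact le_trans (abs_sub _ _) (add_le_add h1 h2))
    | (rw [zero_sub, abs_neg]; exact le_trans h3 (le_add_of_nonneg_right hm))
    | (refine le_trans (abs_sub _ _) ?_; rw [add_comm (cg / |bP p ω i i' j|)];
       exact add_le_add (by rw [abs_neg]; exact h4) h3)
    | (refine le_trans (abs_sub _ _) ?_; rw [add_comm (cg / |bP p ω i i' j|)];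
       exact add_le_add h4 h3)

lemma abs_vs2_sub_Mlim_le {i i' : Fin (2*p)} {cg : ℝ}
    (hcg : ∀ s, |gf' p ω lam i i' s| ≤ cg) (hcg0 : 0 ≤ cg) (j : ℕ) (t : ℝ) :
    |vs2 p ω lam j i i' t - Mlim p ω lam i i' t|
      ≤ cg / |bP p ω i i' j| + cg / |bM p ω i i' j| := by
  have h1 := abs_err_le (hcg t) (Real.abs_cos_le_one (bP p ω i i' j * t)) (bP p ω i i' j)
  have h2 := abs_err_le (hcg t) (Real.abs_cos_le_one (bM p ω i i' j * t)) (bM p ω i i' j)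
  have h3 := abs_err_le (hcg t) (Real.abs_sin_le_one (bP p ω i i' j * t)) (bP p ω i i' j)
  have h4 := abs_err_le (hcg t) (Real.abs_sin_le_one (bM p ω i i' j * t)) (bM p ω i i' j)
  have hm : (0:ℝ) ≤ cg / |bM p ω i i' j| := by positivity
  by_cases hkl : kOf p i = kOf p i' <;> cases hbi : bOf p i <;> cases hbi' : bOf p i'
  all_goals
    simp only [vs2, Mlim, hbi, hbi', Bool.false_eq_true, if_false, if_true]
  all_goals first
    | simp only [if_pos hkl]
    | simp only [if_neg hkl]
  all_goals first
    | (rw [sub_zero]; first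
        | exact le_trans (abs_add_le _ _) (add_le_add (by rw [abs_neg]; exact h1) h2)
        | exact le_trans (abs_add_le _ _) (add_le_add h1 h2)
        | (refine le_trans (abs_sub _ _) ?_; rw [add_comm (cg / |bP p ω i i' j|)];
           exact add_le_add (by rw [abs_neg]; exact h4) h3)
        | (refine le_trans (abs_sub _ _) ?_; rw [add_comm (cg / |bP p ω i i' j|)];
           exact add_le_add h4 h3))
    | (rw [sub_sub_cancel_left, abs_neg]; exact le_trans h3 (le_add_of_nonneg_right hm))

lemma exists_gf_bound (hlamb : ∀ k, ∃ c, ∀ t, |lam k t| ≤ c)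
    (hlamb' : ∀ k, ∃ c, ∀ t, |deriv (lam k) t| ≤ c) (i i' : Fin (2*p)) :
    ∃ c, 0 ≤ c ∧ (∀ t, |gf p ω lam i i' t| ≤ c) ∧ (∀ t, |gf' p ω lam i i' t| ≤ c) := by
  obtain ⟨ck, hck⟩ := hlamb (kOf p i)
  obtain ⟨cl, hcl⟩ := hlamb (kOf p i')
  obtain ⟨ck', hck'⟩ := hlamb' (kOf p i)
  obtain ⟨cl', hcl'⟩ := hlamb' (kOf p i')
  set r := Real.sqrt (ω (kOf p i) / ω (kOf p i')) with hrdef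
  have hr0 : 0 ≤ r := Real.sqrt_nonneg _
  set mk := max ck 1 with hmkdef
  set ml := max cl 1 with hmldef
  set mk' := max ck' 0 with hmkdef'
  set ml' := max cl' 0 with hmldef'
  have hmk0 : 0 ≤ mk := le_trans zero_le_one (le_max_right _ _)
  have hml0 : 0 ≤ ml := le_trans zero_le_one (le_max_right _ _)
  have hmk0' : 0 ≤ mk' := le_max_right _ _
  have hml0' : 0 ≤ ml' := le_max_right _ _
  have hmk : ∀ t, |if bOf p i then 1 else lam (kOf p i) t| ≤ mk := by
    intro t; split
    · rw [abs_one]; exact le_max_right _ _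
    · exact (hck t).trans (le_max_left _ _)
  have hml : ∀ t, |if bOf p i' then 1 else lam (kOf p i') t| ≤ ml := by
    intro t; split
    · rw [abs_one]; exact le_max_right _ _
    · exact (hcl t).trans (le_max_left _ _)
  have hmk' : ∀ t, |if bOf p i then 0 else deriv (lam (kOf p i)) t| ≤ mk' := by
    intro t; split
    · rw [abs_zero]; exact hmk0'
    · exact (hck' t).trans (le_max_left _ _)
  have hml' : ∀ t, |if bOf p i' then 0 else deriv (lam (kOf p i')) t| ≤ ml' := by
    intro t; split
    · rw [abs_zero]; exact hml0'
    · exact (hcl' t).trans (le_max_left _ _)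
  refine ⟨r * (mk * ml) + r * (mk' * ml + mk * ml'), ?_, fun t => ?_, fun t => ?_⟩
  · have : 0 ≤ r * (mk * ml) := mul_nonneg hr0 (mul_nonneg hmk0 hml0)
    have : 0 ≤ r * (mk' * ml + mk * ml') := mul_nonneg hr0
      (add_nonneg (mul_nonneg hmk0' hml0) (mul_nonneg hmk0 hml0'))
    linarith
  · calc |gf p ω lam i i' t|
        = r * (|if bOf p i then 1 else lam (kOf p i) t|
            * |if bOf p i' then 1 else lam (kOf p i') t|) := by
          rw [gf, abs_mul, abs_mul, abs_of_nonneg hr0]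
      _ ≤ r * (mk * ml) := mul_le_mul_of_nonneg_left
          (mul_le_mul (hmk t) (hml t) (abs_nonneg _) hmk0) hr0
      _ ≤ _ := le_add_of_nonneg_right (mul_nonneg hr0
          (add_nonneg (mul_nonneg hmk0' hml0) (mul_nonneg hmk0 hml0')))
  · calc |gf' p ω lam i i' t|
        = r * |(if bOf p i then 0 else deriv (lam (kOf p i)) t)
              * (if bOf p i' then 1 else lam (kOf p i') t)
            + (if bOf p i then 1 else lam (kOf p i) t)
              * (if bOf p i' then 0 else deriv (lam (kOf p i')) t)| := by
          rw [gf', abs_mul, abs_of_nonneg hr0]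
      _ ≤ r * (mk' * ml + mk * ml') := by
          apply mul_le_mul_of_nonneg_left ?_ hr0
          refine le_trans (abs_add_le _ _) (add_le_add ?_ ?_)
          · rw [abs_mul]
            exact mul_le_mul (hmk' t) (hml t) (abs_nonneg _) hmk0'
          · rw [abs_mul]
            exact mul_le_mul (hmk t) (hml' t) (abs_nonneg _) hmk0
      _ ≤ _ := le_add_of_nonneg_left (mul_nonneg hr0 (mul_nonneg hmk0 hml0))

lemma abs_Mlim_le {i i' : Fin (2*p)} {cg : ℝ} (hcg : ∀ s, |gf p ω lam i i' s| ≤ cg)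
    (hcg0 : 0 ≤ cg) (t : ℝ) : |Mlim p ω lam i i' t| ≤ cg := by
  unfold Mlim
  split <;> [skip; simpa using hcg0]
  split <;> split
  all_goals try simp only [abs_neg, abs_zero]
  all_goals first | exact hcg0 | exact hcg t

noncomputable def VS (j : ℕ) : List (Fin (2*p)) → ℝ → ℝ
  | [i] => vs1 p ω lam j i
  | [i, i'] => if j = 0 then fun _ => 0 else vs2 p ω lam j i i'
  | _ => fun _ => 0

noncomputable def WW (j : ℕ) : List (Fin (2*p)) → ℝ → ℝ
  | [i] => W1 p ω lam j i
  | [i, i'] => if j = 0 then fun _ => 0 else W2 p ω lam j i i'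
  | _ => fun _ => 0

end Stmt9Aux

open Stmt9Aux

/-- Let `ω₁,…,ω_p` be pairwise distinct positive reals and let each
`λ_k : ℝ → ℝ` be bounded, `C¹` with bounded derivative.  Then the sequence of ordinary
inputs `u^j_{2k-1}(t) = √(2ω_k j)·λ_k(t)·cos(ω_k j t)`,
`u^j_{2k}(t) = √(2ω_k j)·sin(ω_k j t)` GD(2)-converges uniformly to the polynomial input
`v` of order `≤ 2` with `v_{(2k-1,2k)} = λ_k`, `v_{(2k,2k-1)} = -λ_k`, and `v_I = 0`
otherwise. -/
theorem stmt9 (p : ℕ) (hp : 1 ≤ p) (ω : Fin p → ℝ) (hωpos : ∀ k, 0 < ω k)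
    (hωinj : Function.Injective ω)
    (lam : Fin p → ℝ → ℝ)
    (hlam : ∀ k, (∃ c : ℝ, ∀ t, |lam k t| ≤ c) ∧ ContDiff ℝ 1 (lam k) ∧
      ∃ c : ℝ, ∀ t, |deriv (lam k) t| ≤ c)
    (u : ℕ → Fin (2 * p) → ℝ → ℝ)
    (hu : ∀ (j : ℕ) (t : ℝ) (k : Fin p),
      u j (idxA p k) t = Real.sqrt (2 * ω k * j) * lam k t * Real.cos (ω k * j * t) ∧
      u j (idxB p k) t = Real.sqrt (2 * ω k * j) * Real.sin (ω k * j * t))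
    (v : List (Fin (2 * p)) → ℝ → ℝ)
    (hv1 : ∀ k : Fin p, v [idxA p k, idxB p k] = lam k)
    (hv2 : ∀ k : Fin p, v [idxB p k, idxA p k] = fun t => -lam k t)
    (hv0 : ∀ I : List (Fin (2 * p)), 0 < I.length → I.length ≤ 2 →
      (∀ k : Fin p, I ≠ [idxA p k, idxB p k] ∧ I ≠ [idxB p k, idxA p k]) →
      v I = fun _ => 0) :
    GDConvUnif (2 * p) 2 u v := by
  classical
  have hlamd : ∀ k t, HasDerivAt (lam k) (deriv (lam k) t) t := fun k t =>
    (((hlam k).2.1.differentiable one_ne_zero) t).hasDerivAt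
  have hlamc : ∀ k, Continuous (lam k) := fun k => (hlam k).2.1.continuous
  have hlamc' : ∀ k, Continuous (deriv (lam k)) := fun k =>
    (hlam k).2.1.continuous_deriv le_rfl
  have hueq : ∀ j i, u j i = uF p ω lam j i := by
    intro j i
    funext t
    rcases idx_cases p i with ⟨hi, hb⟩ | ⟨hi, hb⟩
    · rw [show u j i t = u j (idxA p (kOf p i)) t by rw [← hi], (hu j t (kOf p i)).1]
      simp only [uF, hb, Bool.false_eq_true, if_false]
      ring
    · rw [show u j i t = u j (idxB p (kOf p i)) t by rw [← hi], (hu j t (kOf p i)).2]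
      simp only [uF, hb, if_true]
  refine ⟨VS p ω lam, WW p ω lam, ?_, ?_, ?_⟩
  · -- PolyInput
    intro j I hlen1 hlen2
    match I, hlen1, hlen2 with
    | [i], _, _ =>
      refine ⟨(cont_vs1 p ω lam hlamc' j i).measurable, ?_⟩
      obtain ⟨c', hc'⟩ := (hlam (kOf p i)).2.2
      exact ⟨Real.sqrt (2 / (ω (kOf p i) * j)) * max c' 0, fun t =>
        abs_vs1_le p ω lam (fun s => (hc' s).trans (le_max_left _ _)) (le_max_right _ _) j t⟩
    | [i, i'], _, _ =>
      by_cases hj : j = 0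
      · refine ⟨?_, 0, fun t => ?_⟩
        · simp only [VS, if_pos hj]
          exact measurable_const
        · simp only [VS, if_pos hj, abs_zero, le_refl]
      · obtain ⟨cg, hcg0, hcgf, hcgf'⟩ := exists_gf_bound p ω lam
          (fun k => (hlam k).1) (fun k => (hlam k).2.2) i i'
        refine ⟨?_, ?_⟩
        · simp only [VS, if_neg hj]
          exact (cont_vs2 p ω lam hlamc hlamc' j i i').measurable
        · refine ⟨cg / |bP p ω i i' j| + cg / |bM p ω i i' j| + cg, fun t => ?_⟩
          simp only [VS, if_neg hj]
          calc |vs2 p ω lam j i i' t|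
              = |(vs2 p ω lam j i i' t - Mlim p ω lam i i' t) + Mlim p ω lam i i' t| := by
                ring_nf
            _ ≤ |vs2 p ω lam j i i' t - Mlim p ω lam i i' t| + |Mlim p ω lam i i' t| :=
                abs_add_le _ _
            _ ≤ cg / |bP p ω i i' j| + cg / |bM p ω i i' j| + cg :=
                add_le_add (abs_vs2_sub_Mlim_le p ω lam hcgf' hcg0 j t)
                  (abs_Mlim_le p ω lam hcgf hcg0 t)

  · -- IsGenDiff
    intro j
    constructor
    · intro i
      have hW : ∀ x : ℝ, HasDerivAt (W1 p ω lam j i)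
          (vs1 p ω lam j i x - uF p ω lam j i x) x :=
        hasDerivAt_W1 p ω lam hωpos hlamd j i
      have hcont : Continuous fun s => vs1 p ω lam j i s - uF p ω lam j i s :=
        (cont_vs1 p ω lam hlamc' j i).sub (cont_uF p ω lam hlamc j i)
      have heq : (fun s => VS p ω lam j [i] s - u j i s)
          = fun s => vs1 p ω lam j i s - uF p ω lam j i s := by
        funext s
        simp only [VS, hueq]
      refine ⟨fun a b => by rw [heq]; exact hcont.intervalIntegrable a b, fun t => ?_⟩
      have hftc : ∫ s in (0:ℝ)..t, (vs1 p ω lam j i s - uF p ω lam j i s)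
          = W1 p ω lam j i t - W1 p ω lam j i 0 :=
        intervalIntegral.integral_eq_sub_of_hasDerivAt (fun x _ => hW x)
          (hcont.intervalIntegrable 0 t)
      calc WW p ω lam j [i] t = W1 p ω lam j i t := by simp only [WW]
        _ = W1 p ω lam j i 0 + ∫ s in (0:ℝ)..t, (vs1 p ω lam j i s - uF p ω lam j i s) := by
            rw [hftc]; ring
        _ = WW p ω lam j [i] 0 + ∫ s in (0:ℝ)..t, (VS p ω lam j [i] s - u j i s) := by
            rw [heq]; simp only [WW]
    · intro i I hI1 hI2
      match I, hI1, hI2 with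
      | [i'], _, _ =>
        by_cases hj : j = 0
        · subst hj
          have heq : (fun s => VS p ω lam 0 [i, i'] s - u 0 i s * WW p ω lam 0 [i'] s)
              = fun _ => (0:ℝ) := by
            funext s
            simp [VS, WW, hueq, uF]
          refine ⟨fun a b => by rw [heq]; exact continuous_const.intervalIntegrable a b,
            fun t => ?_⟩
          have h2 : ∫ s in (0:ℝ)..t, (VS p ω lam 0 [i, i'] s - u 0 i s * WW p ω lam 0 [i'] s)
              = 0 := by
            rw [heq]; simp
          rw [h2]
          simp [WW]
        · have hj1 : 1 ≤ j := Nat.one_le_iff_ne_zero.mpr hj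
          have hW : ∀ x : ℝ, HasDerivAt (W2 p ω lam j i i')
              (vs2 p ω lam j i i' x - uF p ω lam j i x * W1 p ω lam j i' x) x :=
            hasDerivAt_W2 p ω lam hωpos hωinj hlamd hj1 i i'
          have hcont : Continuous fun s =>
              vs2 p ω lam j i i' s - uF p ω lam j i s * W1 p ω lam j i' s :=
            (cont_vs2 p ω lam hlamc hlamc' j i i').sub
              ((cont_uF p ω lam hlamc j i).mul (cont_W1 p ω lam hlamc j i'))
          have heq : (fun s => VS p ω lam j [i, i'] s - u j i s * WW p ω lam j [i'] s)
              = fun s => vs2 p ω lam j i i' s - uF p ω lam j i s * W1 p ω lam j i' s := by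
            funext s
            simp only [VS, WW, if_neg hj, hueq]
          refine ⟨fun a b => by rw [heq]; exact hcont.intervalIntegrable a b, fun t => ?_⟩
          have hftc : ∫ s in (0:ℝ)..t,
              (vs2 p ω lam j i i' s - uF p ω lam j i s * W1 p ω lam j i' s)
              = W2 p ω lam j i i' t - W2 p ω lam j i i' 0 :=
            intervalIntegral.integral_eq_sub_of_hasDerivAt (fun x _ => hW x)
              (hcont.intervalIntegrable 0 t)
          calc WW p ω lam j [i, i'] t = W2 p ω lam j i i' t := by
                simp only [WW, if_neg hj]
            _ = W2 p ω lam j i i' 0 + ∫ s in (0:ℝ)..t,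
                (vs2 p ω lam j i i' s - uF p ω lam j i s * W1 p ω lam j i' s) := by
                rw [hftc]; ring
            _ = WW p ω lam j [i, i'] 0 + ∫ s in (0:ℝ)..t,
                (VS p ω lam j [i, i'] s - u j i s * WW p ω lam j [i'] s) := by
                rw [heq]; simp only [WW, if_neg hj]
  · -- convergence
    intro I hlen1 hlen2
    match I, hlen1, hlen2 with
    | [i], _, _ =>
      have hvI : v [i] = fun _ => 0 := by
        apply hv0 [i] (by simp) (by simp)
        intro m
        exact ⟨by simp, by simp⟩
      obtain ⟨cl, hcl⟩ := (hlam (kOf p i)).1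
      obtain ⟨cl', hcl'⟩ := (hlam (kOf p i)).2.2
      have ha : 0 < ω (kOf p i) := hωpos _
      have hsq : ∀ j : ℕ, Real.sqrt (2 / (ω (kOf p i) * j))
          = Real.sqrt (2 / ω (kOf p i)) / Real.sqrt j := by
        intro j
        rw [show (2:ℝ) / (ω (kOf p i) * j) = (2 / ω (kOf p i)) / j from
          (div_div 2 (ω (kOf p i)) j).symm, Real.sqrt_div (by positivity)]
      refine ⟨?_, ?_, ?_⟩
      · apply tu_of_bound (b := fun j => Real.sqrt (2 / ω (kOf p i)) * max cl' 0 / Real.sqrt j)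
          (tendsto_div_sqrt _)
        refine eventually_atTop.mpr ⟨1, fun j hj => fun t => ?_⟩
        rw [hvI]
        simp only [VS, sub_zero]
        calc |vs1 p ω lam j i t| ≤ Real.sqrt (2 / (ω (kOf p i) * j)) * max cl' 0 :=
              abs_vs1_le p ω lam (fun s => (hcl' s).trans (le_max_left _ _))
                (le_max_right _ _) j t
          _ = _ := by rw [hsq j]; ring
      · apply tu_of_bound (b := fun j => Real.sqrt (2 / ω (kOf p i)) * max cl 1 / Real.sqrt j)
          (tendsto_div_sqrt _)
        refine eventually_atTop.mpr ⟨1, fun j hj => fun t => ?_⟩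
        simp only [WW, sub_zero]
        calc |W1 p ω lam j i t| ≤ Real.sqrt (2 / (ω (kOf p i) * j)) * max cl 1 :=
              abs_W1_le p ω lam (fun s => (hcl s).trans (le_max_left _ _))
                (le_max_right _ _) j t
          _ = _ := by rw [hsq j]; ring
      · intro hlen
        simp at hlen
    | [i, i'], _, _ =>
      set k := kOf p i with hk
      set l := kOf p i' with hl
      obtain ⟨cg, hcg0, hcgf, hcgf'⟩ := exists_gf_bound p ω lam
        (fun m => (hlam m).1) (fun m => (hlam m).2.2) i i'
      set D := cg / (ω k + ω l) + (if k = l then 0 else cg / |ω k - ω l|) with hD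
      have hD0 : 0 ≤ D := by
        have h1 : 0 ≤ cg / (ω k + ω l) :=
          div_nonneg hcg0 (add_pos (hωpos k) (hωpos l)).le
        have h2 : 0 ≤ (if k = l then 0 else cg / |ω k - ω l|) := by
          split
          · exact le_refl 0
          · positivity
        rw [hD]
        linarith
      have hbound : ∀ j : ℕ, 1 ≤ j →
          cg / |bP p ω i i' j| + cg / |bM p ω i i' j| ≤ D / j := by
        intro j hj
        have hjpos : (0:ℝ) < j := by exact_mod_cast hj
        have h1 : cg / |bP p ω i i' j| = cg / (ω k + ω l) / j := by
          simp only [bP, ← hk, ← hl]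
          rw [abs_of_pos (mul_pos (add_pos (hωpos k) (hωpos l)) hjpos), ← div_div]
        have h2 : cg / |bM p ω i i' j| ≤ (if k = l then 0 else cg / |ω k - ω l|) / j := by
          by_cases hkl : k = l
          · have hz : bM p ω i i' j = 0 := by
              simp only [bM, ← hk, ← hl, hkl, sub_self, zero_mul]
            rw [hz, abs_zero, div_zero, if_pos hkl, zero_div]
          · have habs : |bM p ω i i' j| = |ω k - ω l| * j := by
              simp only [bM, ← hk, ← hl]
              rw [abs_mul, Nat.abs_cast]
            rw [habs, if_neg hkl, ← div_div]
        calc cg / |bP p ω i i' j| + cg / |bM p ω i i' j|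
            ≤ cg / (ω k + ω l) / j + (if k = l then 0 else cg / |ω k - ω l|) / j := by
              rw [h1]
              exact add_le_add_right h2 _
          _ = D / j := by rw [hD, add_div]
      have hMv : Mlim p ω lam i i' = v [i, i'] := by
        rcases idx_cases p i with ⟨hiA, hbi⟩ | ⟨hiB, hbi⟩ <;>
          rcases idx_cases p i' with ⟨hiA', hbi'⟩ | ⟨hiB', hbi'⟩
        · -- (A, A)
          have hv : v [i, i'] = fun _ => 0 := by
            apply hv0 _ (by simp) (by simp)
            intro m
            refine ⟨fun h => ?_, fun h => ?_⟩
            · obtain ⟨h1, h2⟩ : i = idxA p m ∧ i' = idxB p m := by simpa using h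
              rw [h2, bOf_idxB] at hbi'
              exact absurd hbi' (by simp)
            · obtain ⟨h1, h2⟩ : i = idxB p m ∧ i' = idxA p m := by simpa using h
              rw [h1, bOf_idxB] at hbi
              exact absurd hbi (by simp)
          rw [hv]
          funext t
          simp only [Mlim, ← hk, ← hl, hbi, hbi', Bool.false_eq_true, if_false, ite_self]
        · -- (A, B)
          by_cases hkl : k = l
          · have hlist : ([i, i'] : List (Fin (2*p))) = [idxA p k, idxB p k] := by
              rw [hiA, hiB', ← hk, ← hl, hkl]
            rw [hlist, hv1 k]
            funext t
            have hω1 : ω k / ω l = 1 := by rw [hkl]; exact div_self (hωpos l).ne'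
            simp only [Mlim, gf, ← hk, ← hl, if_pos hkl, hbi, hbi', Bool.false_eq_true,
              if_false, if_true]
            rw [hω1, Real.sqrt_one, hkl]
            ring
          · have hv : v [i, i'] = fun _ => 0 := by
              apply hv0 _ (by simp) (by simp)
              intro m
              refine ⟨fun h => ?_, fun h => ?_⟩
              · obtain ⟨h1, h2⟩ : i = idxA p m ∧ i' = idxB p m := by simpa using h
                apply hkl
                rw [hk, hl, h1, h2, kOf_idxA, kOf_idxB]
              · obtain ⟨h1, h2⟩ : i = idxB p m ∧ i' = idxA p m := by simpa using h
                rw [h1, bOf_idxB] at hbi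
                exact absurd hbi (by simp)
            rw [hv]
            funext t
            simp only [Mlim, ← hk, ← hl, if_neg hkl]
        · -- (B, A)
          by_cases hkl : k = l
          · have hlist : ([i, i'] : List (Fin (2*p))) = [idxB p l, idxA p l] := by
              rw [hiB, hiA', ← hk, ← hl, hkl]
            rw [hlist, hv2 l]
            funext t
            have hω1 : ω k / ω l = 1 := by rw [hkl]; exact div_self (hωpos l).ne'
            simp only [Mlim, gf, ← hk, ← hl, if_pos hkl, hbi, hbi', Bool.false_eq_true,
              if_false, if_true]
            rw [hω1, Real.sqrt_one]
            ring
          · have hv : v [i, i'] = fun _ => 0 := by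
              apply hv0 _ (by simp) (by simp)
              intro m
              refine ⟨fun h => ?_, fun h => ?_⟩
              · obtain ⟨h1, h2⟩ : i = idxA p m ∧ i' = idxB p m := by simpa using h
                rw [h1, bOf_idxA] at hbi
                exact absurd hbi (by simp)
              · obtain ⟨h1, h2⟩ : i = idxB p m ∧ i' = idxA p m := by simpa using h
                apply hkl
                rw [hk, hl, h1, h2, kOf_idxA, kOf_idxB]
            rw [hv]
            funext t
            simp only [Mlim, ← hk, ← hl, if_neg hkl]
        · -- (B, B)
          have hv : v [i, i'] = fun _ => 0 := by
            apply hv0 _ (by simp) (by simp)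
            intro m
            refine ⟨fun h => ?_, fun h => ?_⟩
            · obtain ⟨h1, h2⟩ : i = idxA p m ∧ i' = idxB p m := by simpa using h
              rw [h1, bOf_idxA] at hbi
              exact absurd hbi (by simp)
            · obtain ⟨h1, h2⟩ : i = idxB p m ∧ i' = idxA p m := by simpa using h
              rw [h2, bOf_idxA] at hbi'
              exact absurd hbi' (by simp)
          rw [hv]
          funext t
          simp only [Mlim, ← hk, ← hl, hbi, hbi', if_true, ite_self]
      refine ⟨?_, ?_, ?_⟩
      · apply tu_of_bound (b := fun j => D / j) (tendsto_const_div_atTop_nhds_zero_nat D)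
        refine eventually_atTop.mpr ⟨1, fun j hj => fun t => ?_⟩
        have hj0 : j ≠ 0 := by omega
        simp only [VS, if_neg hj0]
        rw [← hMv]
        exact (abs_vs2_sub_Mlim_le p ω lam hcgf' hcg0 j t).trans (hbound j hj)
      · apply tu_of_bound (b := fun j => D / j) (tendsto_const_div_atTop_nhds_zero_nat D)
        refine eventually_atTop.mpr ⟨1, fun j hj => fun t => ?_⟩
        have hj0 : j ≠ 0 := by omega
        simp only [WW, if_neg hj0, sub_zero]
        exact (abs_W2_le p ω lam hcgf hcg0 j t).trans (hbound j hj)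
      · intro _ i''
        obtain ⟨c2, hc2⟩ := (hlam (kOf p i'')).1
        apply tu_of_bound
          (b := fun j => Real.sqrt (2 * ω (kOf p i'')) * max c2 1 * D / Real.sqrt j)
          (tendsto_div_sqrt _)
        refine eventually_atTop.mpr ⟨1, fun j hj => fun t => ?_⟩
        have hj0 : j ≠ 0 := by omega
        have hjpos : (0:ℝ) < j := by
          have : 1 ≤ j := hj
          exact_mod_cast this
        have hsj : (0:ℝ) < Real.sqrt j := Real.sqrt_pos.mpr hjpos
        simp only [WW, if_neg hj0, sub_zero, hueq]
        rw [abs_mul]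
        have hW2b : |W2 p ω lam j i i' t| ≤ D / j :=
          (abs_W2_le p ω lam hcgf hcg0 j t).trans (hbound j hj)
        calc |uF p ω lam j i'' t| * |W2 p ω lam j i i' t|
            ≤ (Real.sqrt (2 * ω (kOf p i'') * j) * max c2 1) * (D / j) :=
              mul_le_mul
                (abs_uF_le p ω lam (fun s => (hc2 s).trans (le_max_left _ _))
                  (le_max_right _ _) j t)
                hW2b (abs_nonneg _)
                (mul_nonneg (Real.sqrt_nonneg _) (le_trans zero_le_one (le_max_right _ _)))
          _ = Real.sqrt (2 * ω (kOf p i'')) * max c2 1 * D / Real.sqrt j := by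
              have key : ∀ A B C s : ℝ, s ≠ 0 → A * s * B * (C / (s * s)) = A * B * C / s := by
                intro A B C s hs
                field_simp
              rw [Real.sqrt_mul (mul_nonneg zero_le_two (hωpos _).le) (j:ℝ)]
              rw [show D / (j:ℝ) = D / (Real.sqrt j * Real.sqrt j) from by
                rw [Real.mul_self_sqrt hjpos.le]]
              exact key _ _ _ _ hsj.ne'
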